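/- For the single-element system F₁ = {x ⊕ y ⊕ z ⊕ 1} and the system F₂ = {¬x, ¬y}, we have d(F₁) = d(F₂) = 2, yet over the basis B₂ = M ∪ {x ⊕ y ⊕ z ⊕ 1} the inversion complexities differ: I_{B₂}(F₁) = 1 while I_{B₂}(F₂) = 2. In particular, inversion complexity over B₂ is not a function of d(F) alone. -/

import Mathlib

open Classical in
/-- Number of jumps (1→0 drops of some member of `F`) between consecutive
elements of a list of Boolean tuples. -/
noncomputable def jumps {k : ℕ} (F : Finset ((Fin k → Bool) → Bool)) :
    List (Fin k → Bool) → ℕ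
  | a :: b :: t =>
      (if ∃ f ∈ F, f a = true ∧ f b = false then 1 else 0) + jumps F (b :: t)
  | _ => 0

/-- Number of value changes of `h` between consecutive elements of a list. -/
def changes {k : ℕ} (h : (Fin k → Bool) → Bool) :
    List (Fin k → Bool) → ℕ
  | a :: b :: t => (if h a ≠ h b then 1 else 0) + changes h (b :: t)
  | _ => 0

/-- An increasing chain of pairwise distinct tuples (coordinatewise order). -/
def IsIncChain {k : ℕ} (l : List (Fin k → Bool)) : Prop :=
  l.Chain' (· ≤ ·) ∧ l.Pairwise (· ≠ ·)

/-- The decrease `d(F)` of a system of Boolean functions: the maximum number of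
jumps over all increasing chains. -/
noncomputable def decrease {k : ℕ} (F : Finset ((Fin k → Bool) → Bool)) : ℕ :=
  sSup {m | ∃ l, IsIncChain l ∧ jumps F l = m}

/-- The decrease `d(f)` of a single Boolean function. -/
noncomputable def decrease1 {k : ℕ} (f : (Fin k → Bool) → Bool) : ℕ :=
  decrease {f}
/-- A Boolean circuit over the basis consisting of all monotone Boolean
functions (weight 0) together with the non-monotone basis functions from `Ω`
(weight 1).  Gate `i` may read the `n` inputs and all previous gate values. -/
structure Circuit (n : ℕ) (Ω : Set (Σ m : ℕ, (Fin m → Bool) → Bool)) where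
  size : ℕ
  gate : (i : Fin size) → ((Fin (n + i) → Bool) → Bool)
  nonmono : Finset (Fin size)
  mono_ok : ∀ i, i ∉ nonmono → Monotone (gate i)
  basis_ok : ∀ i ∈ nonmono, ∃ ω ∈ Ω, ∃ sel : Fin ω.1 → Fin (n + i),
      gate i = fun v => ω.2 (fun j => v (sel j))

/-- The value carried by wire `j` of the circuit (wires `0,…,n-1` are the
inputs, wire `n+i` is the output of gate `i`). -/
def Circuit.wire {n : ℕ} {Ω : Set (Σ m : ℕ, (Fin m → Bool) → Bool)}
    (C : Circuit n Ω) (x : Fin n → Bool) (j : ℕ) : Bool :=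
  if h : j < n then x ⟨j, h⟩
  else if h2 : j - n < C.size then
    C.gate ⟨j - n, h2⟩ (fun t => C.wire x t.val)
  else false
termination_by j
decreasing_by
  have ht := t.isLt
  simp only [not_lt] at h
  simp at ht
  omega

/-- The circuit `C` computes the system `F` if every member of `F` appears on
some wire of `C`. -/
def Circuit.Computes {n : ℕ} {Ω : Set (Σ m : ℕ, (Fin m → Bool) → Bool)}
    (C : Circuit n Ω) (F : Finset ((Fin n → Bool) → Bool)) : Prop :=
  ∀ f ∈ F, ∃ o : ℕ, o < n + C.size ∧ ∀ x, f x = C.wire x o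

/-- The inversion complexity `I_B(F)`: the minimal number of non-monotone
(weight-1) gates in a circuit over the basis computing the system `F`. -/
noncomputable def invCompl (n : ℕ) (Ω : Set (Σ m : ℕ, (Fin m → Bool) → Bool))
    (F : Finset ((Fin n → Bool) → Bool)) : ℕ :=
  sInf {k | ∃ C : Circuit n Ω, C.Computes F ∧ C.nonmono.card = k}

/-- The basis `{¬}`: negation as the unique weight-1 basis function. -/
def negBasis : Set (Σ m : ℕ, (Fin m → Bool) → Bool) :=
  {⟨1, fun v => !(v 0)⟩}


lemma wire_input {n Ω} (C : Circuit n Ω) (x) (j) (h : j < n) :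
    C.wire x j = x ⟨j, h⟩ := by
  rw [Circuit.wire]; simp [h]

lemma wire_gate {n Ω} (C : Circuit n Ω) (x) (j) (h : ¬ j < n) (h2 : j - n < C.size) :
    C.wire x j = C.gate ⟨j - n, h2⟩ (fun t => C.wire x t.val) := by
  rw [Circuit.wire]; simp [h, h2]

lemma wire_far {n Ω} (C : Circuit n Ω) (x) (j) (h : ¬ j < n) (h2 : ¬ j - n < C.size) :
    C.wire x j = false := by
  rw [Circuit.wire]; simp [h, h2]
lemma rep {n : ℕ} {Ω} (C : Circuit n Ω) (g : (Fin n → Bool) → Bool)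
    (hg : ∀ i : Fin C.size, i ∈ C.nonmono → ∀ x, C.wire x (n + i.val) = g x) :
    ∀ j, ∃ H : ((Fin n → Bool) × Bool) → Bool,
      Monotone H ∧ ∀ x, C.wire x j = H (x, g x) := by
  intro j
  induction j using Nat.strong_induction_on with
  | _ j IH =>
    by_cases h : j < n
    · exact ⟨fun p => p.1 ⟨j, h⟩, fun p q hpq => hpq.1 ⟨j, h⟩,
        fun x => wire_input C x j h⟩
    · by_cases h2 : j - n < C.size
      · by_cases h3 : (⟨j - n, h2⟩ : Fin C.size) ∈ C.nonmono
        · refine ⟨fun p => p.2, fun p q hpq => hpq.2, fun x => ?_⟩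
          have hj : n + (j - n) = j := by omega
          have := hg _ h3 x
          rw [hj] at this
          exact this
        · have hmono := C.mono_ok _ h3
          choose H hH hHx using fun t : Fin (n + (j - n)) =>
            IH t.val (by have := t.isLt; omega)
          refine ⟨fun p => C.gate ⟨j - n, h2⟩ (fun t => H t p), ?_, fun x => ?_⟩
          · intro p q hpq
            exact hmono (fun t => hH t hpq)
          · rw [wire_gate C x j h h2]
            congr 1
            funext t
            exact hHx t x
      · exact ⟨fun _ => false, monotone_const, fun x => wire_far C x j h h2⟩
def omega3 : (Fin 3 → Bool) → Bool := fun v => !(v 0 ^^ (v 1 ^^ v 2))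

def Omega1 : Set (Σ m : ℕ, (Fin m → Bool) → Bool) := {⟨3, omega3⟩}

def C1 : Circuit 3 Omega1 where
  size := 1
  gate := fun i v => omega3 (fun j => v (Fin.castLE (Nat.le_add_right 3 i.1) j))
  nonmono := Finset.univ
  mono_ok := fun i hi => absurd (Finset.mem_univ i) hi
  basis_ok := fun i _ =>
    ⟨⟨3, omega3⟩, rfl, Fin.castLE (Nat.le_add_right 3 i.1), rfl⟩

lemma C1_wire (x : Fin 3 → Bool) : C1.wire x 3 = omega3 x := by
  rw [wire_gate C1 x 3 (by norm_num) (by norm_num [C1])]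
  show (!(C1.wire x 0 ^^ (C1.wire x 1 ^^ C1.wire x 2))) = _
  rw [wire_input C1 x 0 (by norm_num), wire_input C1 x 1 (by norm_num),
    wire_input C1 x 2 (by norm_num)]
  rfl

def sel2 : (i : Fin 2) → Fin 3 → Fin (2 + i.1)
  | ⟨0, _⟩ => (![0, 1, 1] : Fin 3 → Fin 2)
  | ⟨1, _⟩ => (![1, 0, 0] : Fin 3 → Fin 3)

def C2 : Circuit 2 Omega1 where
  size := 2
  gate := fun i v => omega3 (fun j => v (sel2 i j))
  nonmono := Finset.univ
  mono_ok := fun i hi => absurd (Finset.mem_univ i) hi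
  basis_ok := fun i _ => ⟨⟨3, omega3⟩, rfl, sel2 i, rfl⟩

lemma C2_wire2 (x : Fin 2 → Bool) : C2.wire x 2 = !(x 0) := by
  rw [wire_gate C2 x 2 (by norm_num) (by norm_num [C2])]
  show (!(C2.wire x 0 ^^ (C2.wire x 1 ^^ C2.wire x 1))) = _
  rw [wire_input C2 x 0 (by norm_num), wire_input C2 x 1 (by norm_num)]
  show (!(x 0 ^^ (x 1 ^^ x 1))) = !(x 0)
  cases hx : x 0 <;> cases hy : x 1 <;> simp [hx, hy]

lemma C2_wire3 (x : Fin 2 → Bool) : C2.wire x 3 = !(x 1) := by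
  rw [wire_gate C2 x 3 (by norm_num) (by norm_num [C2])]
  show (!(C2.wire x 1 ^^ (C2.wire x 0 ^^ C2.wire x 0))) = _
  rw [wire_input C2 x 0 (by norm_num), wire_input C2 x 1 (by norm_num)]
  show (!(x 1 ^^ (x 0 ^^ x 0))) = !(x 1)
  cases hx : x 0 <;> cases hy : x 1 <;> simp [hx, hy]
def Wt3 (v : Fin 3 → Bool) : ℕ := (v 0).toNat + (v 1).toNat + (v 2).toNat
def Wt2 (v : Fin 2 → Bool) : ℕ := (v 0).toNat + (v 1).toNat

lemma jumps_nil {k} (F : Finset ((Fin k → Bool) → Bool)) : jumps F [] = 0 := by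
  simp [jumps]

lemma jumps_single {k} (F : Finset ((Fin k → Bool) → Bool)) (a) : jumps F [a] = 0 := by
  simp [jumps]

lemma jumps_cons {k} (F : Finset ((Fin k → Bool) → Bool)) (a b t) :
    jumps F (a :: b :: t) =
      (if ∃ f ∈ F, f a = true ∧ f b = false then 1 else 0) + jumps F (b :: t) := by
  simp [jumps]

lemma wt3_le (v : Fin 3 → Bool) : Wt3 v ≤ 3 := by
  revert v; decide

lemma wt3_mono : ∀ a b : Fin 3 → Bool, (∀ i, a i ≤ b i) → Wt3 a ≤ Wt3 b := by decide

lemma wt3_TF : ∀ a b : Fin 3 → Bool, (∀ i, a i ≤ b i) →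
    omega3 a = true → omega3 b = false → Wt3 a + 1 ≤ Wt3 b := by decide

lemma wt3_FT : ∀ a b : Fin 3 → Bool, (∀ i, a i ≤ b i) →
    omega3 a = false → omega3 b = true → Wt3 a + 1 ≤ Wt3 b := by decide

lemma jumps_le_F1 : ∀ (t : List (Fin 3 → Bool)) (a), List.Chain' (· ≤ ·) (a :: t) →
    2 * jumps {omega3} (a :: t) + Wt3 a ≤ 3 + (if omega3 a = true then 1 else 0) := by
  intro t
  induction t with
  | nil => intro a _; have := wt3_le a; rw [jumps_single]; omega
  | cons b t IH =>
    intro a hch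
    replace hch := List.isChain_cons_cons.mp hch
    have hab : ∀ i, a i ≤ b i := fun i => hch.1 i
    have IH' := IH b hch.2
    rw [jumps_cons]
    by_cases hP : omega3 a = true ∧ omega3 b = false
    · rw [if_pos ⟨omega3, Finset.mem_singleton_self _, hP.1, hP.2⟩]
      rw [hP.1, if_pos rfl]
      rw [hP.2] at IH'
      simp only [Bool.false_eq_true, if_false] at IH'
      have := wt3_TF a b hab hP.1 hP.2
      omega
    · rw [if_neg ?_]
      · cases ha : omega3 a <;> cases hb : omega3 b
        · simp only [ha, hb, Bool.false_eq_true, if_false] at IH' ⊢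
          have := wt3_mono a b hab; omega
        · simp only [ha, hb, Bool.false_eq_true, if_false, if_true] at IH' ⊢
          have := wt3_FT a b hab ha hb; omega
        · exact absurd ⟨ha, hb⟩ hP
        · simp only [ha, hb, if_true] at IH' ⊢
          have := wt3_mono a b hab; omega
      · rintro ⟨f, hf, h1, h2⟩
        rw [Finset.mem_singleton] at hf
        subst hf
        exact hP ⟨h1, h2⟩

lemma wt2_le (v : Fin 2 → Bool) : Wt2 v ≤ 2 := by revert v; decide

lemma wt2_mono : ∀ a b : Fin 2 → Bool, (∀ i, a i ≤ b i) → Wt2 a ≤ Wt2 b := by decide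

lemma wt2_drop0 : ∀ a b : Fin 2 → Bool, (∀ i, a i ≤ b i) →
    (!(a 0)) = true → (!(b 0)) = false → Wt2 a + 1 ≤ Wt2 b := by decide

lemma wt2_drop1 : ∀ a b : Fin 2 → Bool, (∀ i, a i ≤ b i) →
    (!(a 1)) = true → (!(b 1)) = false → Wt2 a + 1 ≤ Wt2 b := by decide

lemma jumps_le_F2 : ∀ (t : List (Fin 2 → Bool)) (a), List.Chain' (· ≤ ·) (a :: t) →
    jumps {fun v : Fin 2 → Bool => !(v 0), fun v : Fin 2 → Bool => !(v 1)} (a :: t)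
      + Wt2 a ≤ 2 := by
  intro t
  induction t with
  | nil => intro a _; have := wt2_le a; rw [jumps_single]; linarith
  | cons b t IH =>
    intro a hch
    replace hch := List.isChain_cons_cons.mp hch
    have hab : ∀ i, a i ≤ b i := fun i => hch.1 i
    have IH' := IH b hch.2
    rw [jumps_cons]
    by_cases hP : ∃ f ∈ ({fun v : Fin 2 → Bool => !(v 0), fun v : Fin 2 → Bool => !(v 1)} :
        Finset ((Fin 2 → Bool) → Bool)), f a = true ∧ f b = false
    · rw [if_pos hP]
      obtain ⟨f, hf, h1, h2⟩ := hP
      rw [Finset.mem_insert, Finset.mem_singleton] at hf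
      rcases hf with hf | hf
      · rw [hf] at h1 h2
        have h1' : (!(a 0)) = true := h1
        have h2' : (!(b 0)) = false := h2
        have := wt2_drop0 a b hab h1' h2'
        clear * - this IH'
        linarith
      · rw [hf] at h1 h2
        have h1' : (!(a 1)) = true := h1
        have h2' : (!(b 1)) = false := h2
        have := wt2_drop1 a b hab h1' h2'
        clear * - this IH'
        linarith
    · rw [if_neg hP]
      have := wt2_mono a b hab
      clear * - this IH'
      linarith
def c000 : Fin 3 → Bool := fun _ => false
def c100 : Fin 3 → Bool := ![true, false, false]
def c110 : Fin 3 → Bool := ![true, true, false]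
def c111 : Fin 3 → Bool := fun _ => true

lemma bound1 : ∀ l, List.Chain' (· ≤ ·) l → jumps ({omega3} : Finset ((Fin 3 → Bool) → Bool)) l ≤ 2 := by
  intro l hc
  cases l with
  | nil => rw [jumps_nil]; norm_num
  | cons a t =>
    have h := jumps_le_F1 t a hc
    have h2 : (if omega3 a = true then 1 else 0) ≤ 1 := by split <;> norm_num
    omega

lemma dec1 : decrease ({omega3} : Finset ((Fin 3 → Bool) → Bool)) = 2 := by
  apply le_antisymm
  · apply csSup_le
    · exact ⟨0, [], ⟨List.isChain_nil, List.Pairwise.nil⟩, jumps_nil _⟩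
    · rintro m ⟨l, ⟨hc, _⟩, rfl⟩
      exact bound1 l hc
  · apply le_csSup
    · exact ⟨2, by rintro m ⟨l, ⟨hc, _⟩, rfl⟩; exact bound1 l hc⟩
    · refine ⟨[c000, c100, c110, c111], ⟨?_, ?_⟩, ?_⟩
      · refine List.isChain_cons_cons.mpr ⟨Pi.le_def.mpr (by decide),
          List.isChain_cons_cons.mpr ⟨Pi.le_def.mpr (by decide),
          List.isChain_cons_cons.mpr ⟨Pi.le_def.mpr (by decide), List.isChain_singleton _⟩⟩⟩
      · refine List.pairwise_cons.mpr ⟨?_, List.pairwise_cons.mpr ⟨?_,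
          List.pairwise_cons.mpr ⟨?_, List.pairwise_singleton _ _⟩⟩⟩
        · intro b hb h
          fin_cases hb
          · exact absurd (congrFun h 0) (by decide)
          · exact absurd (congrFun h 0) (by decide)
          · exact absurd (congrFun h 0) (by decide)
        · intro b hb h
          fin_cases hb
          · exact absurd (congrFun h 1) (by decide)
          · exact absurd (congrFun h 1) (by decide)
        · intro b hb h
          fin_cases hb
          exact absurd (congrFun h 2) (by decide)
      · rw [jumps_cons, jumps_cons, jumps_cons, jumps_single]
        rw [if_pos ⟨omega3, Finset.mem_singleton_self _, by decide, by decide⟩]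
        rw [if_neg ?_, if_pos ⟨omega3, Finset.mem_singleton_self _, by decide, by decide⟩]
        · rintro ⟨f, hf, h1, h2⟩
          rw [Finset.mem_singleton] at hf
          rw [hf] at h1
          exact absurd h1 (by decide)

def d00 : Fin 2 → Bool := fun _ => false
def d10 : Fin 2 → Bool := ![true, false]
def d11 : Fin 2 → Bool := fun _ => true

lemma bound2 : ∀ l, List.Chain' (· ≤ ·) l →
    jumps ({fun v : Fin 2 → Bool => !(v 0), fun v : Fin 2 → Bool => !(v 1)} :
      Finset ((Fin 2 → Bool) → Bool)) l ≤ 2 := by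
  intro l hc
  cases l with
  | nil => rw [jumps_nil]; norm_num
  | cons a t =>
    have h := jumps_le_F2 t a hc
    exact le_trans (Nat.le_add_right _ _) h

lemma dec2 : decrease ({fun v : Fin 2 → Bool => !(v 0), fun v : Fin 2 → Bool => !(v 1)} :
    Finset ((Fin 2 → Bool) → Bool)) = 2 := by
  apply le_antisymm
  · apply csSup_le
    · exact ⟨0, [], ⟨List.isChain_nil, List.Pairwise.nil⟩, jumps_nil _⟩
    · rintro m ⟨l, ⟨hc, _⟩, rfl⟩
      exact bound2 l hc
  · apply le_csSup
    · exact ⟨2, by rintro m ⟨l, ⟨hc, _⟩, rfl⟩; exact bound2 l hc⟩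
    · refine ⟨[d00, d10, d11], ⟨?_, ?_⟩, ?_⟩
      · exact List.isChain_cons_cons.mpr ⟨Pi.le_def.mpr (by decide),
          List.isChain_cons_cons.mpr ⟨Pi.le_def.mpr (by decide), List.isChain_singleton _⟩⟩
      · refine List.pairwise_cons.mpr ⟨?_, List.pairwise_cons.mpr ⟨?_,
          List.pairwise_singleton _ _⟩⟩
        · intro b hb h
          fin_cases hb
          · exact absurd (congrFun h 0) (by decide)
          · exact absurd (congrFun h 0) (by decide)
        · intro b hb h
          fin_cases hb
          exact absurd (congrFun h 1) (by decide)
      · rw [jumps_cons, jumps_cons, jumps_single]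
        rw [if_pos ⟨fun v : Fin 2 → Bool => !(v 0), Finset.mem_insert_self _ _,
          by decide, by decide⟩]
        rw [if_pos ⟨fun v : Fin 2 → Bool => !(v 1),
          Finset.mem_insert_of_mem (Finset.mem_singleton_self _), by decide, by decide⟩]
lemma inv1 : invCompl 3 ({⟨3, fun v => !(v 0 ^^ (v 1 ^^ v 2))⟩} :
    Set (Σ m : ℕ, (Fin m → Bool) → Bool))
    ({fun v : Fin 3 → Bool => !(v 0 ^^ (v 1 ^^ v 2))} :
      Finset ((Fin 3 → Bool) → Bool)) = 1 := by
  have h1 : 1 ∈ {k | ∃ C : Circuit 3 Omega1,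
      C.Computes {fun v : Fin 3 → Bool => !(v 0 ^^ (v 1 ^^ v 2))} ∧ C.nonmono.card = k} := by
    refine ⟨C1, ?_, by simp [C1]⟩
    intro f hf
    rw [Finset.mem_singleton] at hf
    refine ⟨3, by simp [C1], fun x => ?_⟩
    rw [hf]
    exact (C1_wire x).symm
  have h0 : 0 ∉ {k | ∃ C : Circuit 3 Omega1,
      C.Computes {fun v : Fin 3 → Bool => !(v 0 ^^ (v 1 ^^ v 2))} ∧ C.nonmono.card = k} := by
    rintro ⟨C, hcomp, hcard⟩
    have hE := Finset.card_eq_zero.mp hcard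
    obtain ⟨o, _, ho⟩ := hcomp _ (Finset.mem_singleton_self _)
    obtain ⟨H, hm, he⟩ := rep C (fun _ => false)
      (fun i hi => absurd (hE ▸ hi) (Finset.notMem_empty i)) o
    have key : ∀ x : Fin 3 → Bool, (!(x 0 ^^ (x 1 ^^ x 2))) = H (x, false) :=
      fun x => (ho x).trans (he x)
    have hmono : c000 ≤ c100 := Pi.le_def.mpr (by decide)
    have hle := hm (Prod.mk_le_mk.mpr ⟨hmono, le_refl false⟩)
    rw [← key c000, ← key c100] at hle
    exact absurd hle (by decide)
  have hne : ({k | ∃ C : Circuit 3 Omega1,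
      C.Computes {fun v : Fin 3 → Bool => !(v 0 ^^ (v 1 ^^ v 2))} ∧ C.nonmono.card = k} :
      Set ℕ).Nonempty := ⟨1, h1⟩
  have hmem := Nat.sInf_mem hne
  show sInf _ = 1
  rcases Nat.lt_or_ge (sInf {k | ∃ C : Circuit 3 Omega1,
      C.Computes {fun v : Fin 3 → Bool => !(v 0 ^^ (v 1 ^^ v 2))} ∧ C.nonmono.card = k}) 1
    with h | h
  · exfalso
    have hz : sInf {k | ∃ C : Circuit 3 Omega1,
        C.Computes {fun v : Fin 3 → Bool => !(v 0 ^^ (v 1 ^^ v 2))} ∧ C.nonmono.card = k} = 0 :=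
      Nat.lt_one_iff.mp h
    rw [hz] at hmem
    exact h0 hmem
  · exact le_antisymm (Nat.sInf_le h1) h

lemma hlow2 : ∀ C : Circuit 2 Omega1,
    C.Computes {fun v : Fin 2 → Bool => !(v 0), fun v : Fin 2 → Bool => !(v 1)} →
    C.nonmono.card ≤ 1 → False := by
  intro C hcomp hcard
  obtain ⟨g, hg⟩ : ∃ g : (Fin 2 → Bool) → Bool, ∀ i : Fin C.size, i ∈ C.nonmono → ∀ x,
      C.wire x (2 + i.val) = g x := by
    rcases Finset.eq_empty_or_nonempty C.nonmono with hE | ⟨i0, hi0⟩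
    · exact ⟨fun _ => false, fun i hi => absurd (hE ▸ hi) (Finset.notMem_empty i)⟩
    · refine ⟨fun x => C.wire x (2 + i0.val), fun i hi x => ?_⟩
      have hii : i = i0 := Finset.card_le_one.mp hcard i hi i0 hi0
      rw [hii]
  obtain ⟨o1, _, ho1⟩ := hcomp _ (Finset.mem_insert_self _ _)
  obtain ⟨o2, _, ho2⟩ := hcomp _ (Finset.mem_insert_of_mem (Finset.mem_singleton_self _))
  obtain ⟨H1, hm1, he1⟩ := rep C g hg o1
  obtain ⟨H2, hm2, he2⟩ := rep C g hg o2
  have hab : d00 ≤ d10 := Pi.le_def.mpr (by decide)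
  have hbc : d10 ≤ d11 := Pi.le_def.mpr (by decide)
  have e1a : H1 (d00, g d00) = true := by rw [← he1 d00, ← ho1 d00]; decide
  have e1b : H1 (d10, g d10) = false := by rw [← he1 d10, ← ho1 d10]; decide
  have e2b : H2 (d10, g d10) = true := by rw [← he2 d10, ← ho2 d10]; decide
  have e2c : H2 (d11, g d11) = false := by rw [← he2 d11, ← ho2 d11]; decide
  have hgb_false : g d10 = false := by
    cases h : g d10 with
    | false => rfl
    | true =>
      exfalso
      have hle : g d00 ≤ g d10 := by rw [h]; exact Bool.le_true _
      have := hm1 (Prod.mk_le_mk.mpr ⟨hab, hle⟩)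
      rw [e1a, e1b] at this
      exact absurd this (by decide)
  have hgb_true : g d10 = true := by
    cases h : g d10 with
    | true => rfl
    | false =>
      exfalso
      have hle : g d10 ≤ g d11 := by rw [h]; exact Bool.false_le _
      have := hm2 (Prod.mk_le_mk.mpr ⟨hbc, hle⟩)
      rw [e2b, e2c] at this
      exact absurd this (by decide)
  rw [hgb_false] at hgb_true
  exact Bool.noConfusion hgb_true

lemma inv2 : invCompl 2 ({⟨3, fun v => !(v 0 ^^ (v 1 ^^ v 2))⟩} :
    Set (Σ m : ℕ, (Fin m → Bool) → Bool))
    ({fun v : Fin 2 → Bool => !(v 0), fun v : Fin 2 → Bool => !(v 1)} :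
      Finset ((Fin 2 → Bool) → Bool)) = 2 := by
  have h2 : 2 ∈ {k | ∃ C : Circuit 2 Omega1,
      C.Computes {fun v : Fin 2 → Bool => !(v 0), fun v : Fin 2 → Bool => !(v 1)} ∧
      C.nonmono.card = k} := by
    refine ⟨C2, ?_, by simp [C2]⟩
    intro f hf
    rw [Finset.mem_insert, Finset.mem_singleton] at hf
    rcases hf with hf | hf
    · exact ⟨2, by simp [C2], fun x => by rw [hf]; exact (C2_wire2 x).symm⟩
    · exact ⟨3, by simp [C2], fun x => by rw [hf]; exact (C2_wire3 x).symm⟩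
  have hne : ({k | ∃ C : Circuit 2 Omega1,
      C.Computes {fun v : Fin 2 → Bool => !(v 0), fun v : Fin 2 → Bool => !(v 1)} ∧
      C.nonmono.card = k} : Set ℕ).Nonempty := ⟨2, h2⟩
  have hmem := Nat.sInf_mem hne
  show sInf _ = 2
  have hge : 2 ≤ sInf {k | ∃ C : Circuit 2 Omega1,
      C.Computes {fun v : Fin 2 → Bool => !(v 0), fun v : Fin 2 → Bool => !(v 1)} ∧
      C.nonmono.card = k} := by
    by_contra h
    push_neg at h
    obtain ⟨C, hcomp, hcard⟩ := hmem
    refine hlow2 C hcomp ?_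
    rw [hcard]
    exact Nat.lt_succ_iff.mp h
  exact le_antisymm (Nat.sInf_le h2) hge

/-- for `F₁ = {x⊕y⊕z⊕1}` and `F₂ = {¬x, ¬y}` over the basis
`B₂ = M ∪ {x⊕y⊕z⊕1}`: `d(F₁) = d(F₂) = 2` yet `I_{B₂}(F₁) = 1` and
`I_{B₂}(F₂) = 2`, so inversion complexity is not a function of `d(F)` alone. -/
theorem stmt15 :
    decrease ({fun v : Fin 3 → Bool => !(v 0 ^^ (v 1 ^^ v 2))} :
        Finset ((Fin 3 → Bool) → Bool)) = 2 ∧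
    decrease ({fun v : Fin 2 → Bool => !(v 0), fun v : Fin 2 → Bool => !(v 1)} :
        Finset ((Fin 2 → Bool) → Bool)) = 2 ∧
    invCompl 3 ({⟨3, fun v => !(v 0 ^^ (v 1 ^^ v 2))⟩} :
        Set (Σ m : ℕ, (Fin m → Bool) → Bool))
      ({fun v : Fin 3 → Bool => !(v 0 ^^ (v 1 ^^ v 2))} :
        Finset ((Fin 3 → Bool) → Bool)) = 1 ∧
    invCompl 2 ({⟨3, fun v => !(v 0 ^^ (v 1 ^^ v 2))⟩} :
        Set (Σ m : ℕ, (Fin m → Bool) → Bool))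
      ({fun v : Fin 2 → Bool => !(v 0), fun v : Fin 2 → Bool => !(v 1)} :
        Finset ((Fin 2 → Bool) → Bool)) = 2 := by
  exact ⟨dec1, dec2, inv1, inv2⟩
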